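/- Let ψ : ℕ → ℝ satisfy Σ_{n≥0} ψ_n = 1 and σ_I²(ψ) = Σ_{n≥0} (Σ_{j=0}^{n−1} ψ_j − 1)² < ∞. For an integer k ≥ 1 define the pure-delay policy ψ′ by ψ′_n = ψ_{n−k} for n ≥ k and ψ′_n = 0 for n < k. Then σ_I²(ψ′) = σ_I²(ψ) + k. Moreover, if Σ_{n≥0} |ψ_n| < ∞, then |Σ_{n≥0} ψ′_n e^{−inλ}| = |Σ_{n≥0} ψ_n e^{−inλ}| for every λ, so the spectral density of the orders—and hence the supplier's mean squared forecast error—is unchanged by the pure delay. Consequently, a pure delay of k ≥ 1 periods strictly increases the total supply-chain cost κ·σ_I + σ_S for any κ > 0. -/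

import Mathlib

open MeasureTheory intervalIntegral

/-- Inventory variance `σ_I²(ψ) = Σ_{n≥0} (Σ_{j<n} ψ_j − 1)²` of a policy. -/
noncomputable def sigmaI2 (ψ : ℕ → ℝ) : ℝ :=
  ∑' n : ℕ, (∑ j ∈ Finset.range n, ψ j - 1) ^ 2

/-- Supplier's MSFE from Kolmogorov's formula applied to the spectral density
`λ ↦ |Σ_n ψ_n e^{−inλ}|²`. -/
noncomputable def sigmaS2spec (ψ : ℕ → ℝ) : ℝ :=
  Real.exp ((1 / (2 * Real.pi)) * ∫ l in (-Real.pi)..Real.pi,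
    Real.log (‖∑' n : ℕ, (ψ n : ℂ) * Complex.exp (-Complex.I * n * l)‖ ^ 2))

/-- A pure delay of `k ≥ 1` periods adds exactly `k` to the inventory variance,
leaves the spectral density of orders (hence the supplier's forecast error)
unchanged, and therefore strictly increases the total cost `κ·σ_I + σ_S` for
every `κ > 0`. -/
theorem stmt_8 (ψ : ℕ → ℝ)
    (hsum : Filter.Tendsto (fun N => ∑ n ∈ Finset.range N, ψ n) Filter.atTop (nhds 1))
    (hI : Summable (fun n : ℕ => (∑ j ∈ Finset.range n, ψ j - 1) ^ 2))
    (k : ℕ) (hk : 1 ≤ k)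
    (ψ' : ℕ → ℝ) (hψ' : ψ' = fun n => if k ≤ n then ψ (n - k) else 0) :
    sigmaI2 ψ' = sigmaI2 ψ + k ∧
    (Summable (fun n : ℕ => |ψ n|) →
      (∀ l : ℝ,
        ‖∑' n : ℕ, (ψ' n : ℂ) * Complex.exp (-Complex.I * n * l)‖ =
          ‖∑' n : ℕ, (ψ n : ℂ) * Complex.exp (-Complex.I * n * l)‖) ∧
      sigmaS2spec ψ' = sigmaS2spec ψ ∧
      ∀ κ : ℝ, 0 < κ →
        κ * Real.sqrt (sigmaI2 ψ') + Real.sqrt (sigmaS2spec ψ') >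
          κ * Real.sqrt (sigmaI2 ψ) + Real.sqrt (sigmaS2spec ψ)) := by
  -- partial sums of ψ'
  have hzero : ∀ j, j < k → ψ' j = 0 := by
    intro j hj; simp [hψ', Nat.not_le.mpr hj]
  have hpartial : ∀ m : ℕ, ∑ j ∈ Finset.range (k + m), ψ' j = ∑ j ∈ Finset.range m, ψ j := by
    intro m
    rw [Finset.sum_range_add]
    have h1 : ∑ j ∈ Finset.range k, ψ' j = 0 :=
      Finset.sum_eq_zero fun j hj => hzero j (Finset.mem_range.mp hj)
    have h2 : ∀ i ∈ Finset.range m, ψ' (k + i) = ψ i := by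
      intro i _; simp [hψ']
    rw [h1, Finset.sum_congr rfl h2, zero_add]
  set f : ℕ → ℝ := fun n => (∑ j ∈ Finset.range n, ψ j - 1) ^ 2 with hf
  set f' : ℕ → ℝ := fun n => (∑ j ∈ Finset.range n, ψ' j - 1) ^ 2 with hf'
  have hshift : ∀ n : ℕ, f' (n + k) = f n := by
    intro n; simp only [hf', hf]
    rw [show n + k = k + n from Nat.add_comm n k, hpartial]
  have hsmall : ∀ n, n < k → f' n = 1 := by
    intro n hn
    have : ∑ j ∈ Finset.range n, ψ' j = 0 :=
      Finset.sum_eq_zero fun j hj => hzero j (lt_trans (Finset.mem_range.mp hj) hn)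
    simp [hf', this]
  have hf'sum : Summable f' := by
    rw [← summable_nat_add_iff k]
    exact (funext hshift ▸ hI : Summable fun n => f' (n + k))
  have part1 : sigmaI2 ψ' = sigmaI2 ψ + k := by
    unfold sigmaI2
    have := (hf'sum.sum_add_tsum_nat_add k).symm
    rw [show (∑' n, f' n) = _ from this]
    have h1 : ∑ i ∈ Finset.range k, f' i = k := by
      rw [Finset.sum_congr rfl fun i hi => hsmall i (Finset.mem_range.mp hi)]
      simp
    have h2 : (∑' n, f' (n + k)) = ∑' n, f n := by
      exact tsum_congr hshift
    rw [h1, h2, add_comm]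
  refine ⟨part1, fun habs => ?_⟩
  -- norms of exponentials
  have hexp1 : ∀ (n : ℕ) (l : ℝ), ‖Complex.exp (-Complex.I * n * l)‖ = 1 := by
    intro n l
    rw [Complex.norm_exp]
    simp
  have hψ'abs : Summable fun n => |ψ' n| := by
    rw [← summable_nat_add_iff k]
    have : (fun n => |ψ' (n + k)|) = fun n => |ψ n| := by
      funext n; simp [hψ']
    rw [this]; exact habs
  have key : ∀ l : ℝ,
      ‖∑' n : ℕ, (ψ' n : ℂ) * Complex.exp (-Complex.I * n * l)‖ =
        ‖∑' n : ℕ, (ψ n : ℂ) * Complex.exp (-Complex.I * n * l)‖ := by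
    intro l
    set g : ℕ → ℂ := fun n => (ψ n : ℂ) * Complex.exp (-Complex.I * n * l) with hg
    set g' : ℕ → ℂ := fun n => (ψ' n : ℂ) * Complex.exp (-Complex.I * n * l) with hg'
    have hg'sum : Summable g' := by
      apply Summable.of_norm
      have : ∀ n, ‖g' n‖ = |ψ' n| := by
        intro n; rw [hg', norm_mul, hexp1, mul_one, Complex.norm_real, Real.norm_eq_abs]
      rw [funext this]; exact hψ'abs
    have hsplit := (hg'sum.sum_add_tsum_nat_add k).symm
    have h0 : ∑ i ∈ Finset.range k, g' i = 0 :=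
      Finset.sum_eq_zero fun i hi => by
        simp [hg', hzero i (Finset.mem_range.mp hi)]
    have hterm : ∀ n : ℕ, g' (n + k) =
        Complex.exp (-Complex.I * k * l) * g n := by
      intro n
      have h1 : ψ' (n + k) = ψ n := by simp [hψ']
      simp only [hg', hg, h1]
      have h2 : -Complex.I * ((n : ℕ) + k : ℕ) * l
          = -Complex.I * (k : ℕ) * l + -Complex.I * (n : ℕ) * l := by
        push_cast; ring
      rw [h2, Complex.exp_add]
      ring
    calc ‖∑' n, g' n‖
        = ‖∑ i ∈ Finset.range k, g' i + ∑' n, g' (n + k)‖ := by rw [← hsplit]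
      _ = ‖∑' n, g' (n + k)‖ := by rw [h0, zero_add]
      _ = ‖Complex.exp (-Complex.I * k * l) * ∑' n, g n‖ := by
          rw [tsum_congr hterm, tsum_mul_left]
      _ = ‖∑' n, g n‖ := by
          rw [norm_mul, hexp1 k l, one_mul]
  have hspec : sigmaS2spec ψ' = sigmaS2spec ψ := by
    unfold sigmaS2spec
    congr 1
    congr 1
    apply intervalIntegral.integral_congr
    intro l _
    dsimp only
    rw [key l]
  refine ⟨key, hspec, fun κ hκ => ?_⟩
  have hI0 : 0 ≤ sigmaI2 ψ := tsum_nonneg fun n => sq_nonneg _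
  have hlt : sigmaI2 ψ < sigmaI2 ψ' := by
    rw [part1]
    have : (0 : ℝ) < k := by exact_mod_cast Nat.lt_of_lt_of_le Nat.zero_lt_one hk
    linarith
  have : Real.sqrt (sigmaI2 ψ) < Real.sqrt (sigmaI2 ψ') := Real.sqrt_lt_sqrt hI0 hlt
  rw [hspec]
  have := mul_lt_mul_of_pos_left this hκ
  linarith
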